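/- arXiv:1011.0359 — 3 statements merged into one kernel-verified Lean document; each statement's English description precedes it below -/
import Mathlib

section
/- Let f be a transcendental entire function, let R > 0 be such that M(r, f) > r for all r ≥ R, and suppose that A_R(f) is a spider's web. Let K be a connected component of the complement of A(f). Then every open neighbourhood of K contains a closed subset of A(f) that surrounds K. -/
open Set Metric Topology Function Bornology

/-- The maximum modulus `M(r, f)` of `f` on the circle `|z| = r`. -/
noncomputable def maxMod (f : ℂ → ℂ) (r : ℝ) : ℝ :=
  sSup ((fun z => ‖f z‖) '' Metric.sphere (0 : ℂ) r)

/-- `f` is a transcendental entire function: holomorphic on all of `ℂ` and not a polynomial. -/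
def TranscEntire (f : ℂ → ℂ) : Prop :=
  Differentiable ℂ f ∧ ¬ ∃ p : Polynomial ℂ, ∀ z, f z = p.eval z

/-- The fast escaping set `A(f)` (with parameter `R`). -/
def fastEscaping (f : ℂ → ℂ) (R : ℝ) : Set ℂ :=
  {z | ∃ L : ℕ, ∀ n : ℕ, (maxMod f)^[n] R ≤ ‖f^[n + L] z‖}

/-- The `L`-th level `A_R^L(f)` of the fast escaping set. -/
def levelSet (f : ℂ → ℂ) (R : ℝ) (L : ℤ) : Set ℂ :=
  {z | ∀ n : ℕ, 0 ≤ (n : ℤ) + L →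
    (maxMod f)^[((n : ℤ) + L).toNat] R ≤ ‖f^[n] z‖}

/-- `E ⊆ ℂ` is an (infinite) spider's web. -/
def SpidersWeb (E : Set ℂ) : Prop :=
  IsConnected E ∧ ∃ G : ℕ → Set ℂ,
    (∀ n, IsOpen (G n) ∧ IsConnected (G n) ∧ Bornology.IsBounded (G n) ∧
      SimplyConnectedSpace (G n) ∧ G n ⊆ G (n + 1) ∧ frontier (G n) ⊆ E) ∧
    (⋃ n, G n) = Set.univ

/-- `K` is a connected component of the set `S`. -/
def IsCompOf {X : Type*} [TopologicalSpace X] (K S : Set X) : Prop :=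
  ∃ z ∈ S, K = connectedComponentIn S z

/-- The `n`-th fundamental hole for `A_R(f)`: the component of the complement of
`A_R^n(f)` containing `0`. -/
noncomputable def fundHole (f : ℂ → ℂ) (R : ℝ) (n : ℤ) : Set ℂ :=
  connectedComponentIn (levelSet f R n)ᶜ 0

/-- The `n`-th fundamental loop for `A_R(f)`. -/
noncomputable def fundLoop (f : ℂ → ℂ) (R : ℝ) (n : ℤ) : Set ℂ :=
  frontier (fundHole f R n)

section Aux
variable {f : ℂ → ℂ} {R : ℝ}

lemma bddAbove_maxMod (hf : Differentiable ℂ f) (r : ℝ) :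
    BddAbove ((fun z => ‖f z‖) '' Metric.sphere (0 : ℂ) r) :=
  ((isCompact_sphere (0:ℂ) _).image (continuous_norm.comp hf.continuous)).bddAbove

lemma abs_le_maxMod (hf : Differentiable ℂ f) (w : ℂ) :
    ‖f w‖ ≤ maxMod f (‖w‖) := by
  have h1 : w ∈ Metric.sphere (0:ℂ) (‖w‖) := by
    simp
  exact le_csSup (bddAbove_maxMod hf _) ⟨w, h1, rfl⟩

lemma sphere_nonempty' {r : ℝ} (hr : 0 ≤ r) : (Metric.sphere (0:ℂ) r).Nonempty :=
  NormedSpace.sphere_nonempty.mpr hr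

lemma maxMod_le (hf : Differentiable ℂ f) {r C : ℝ} (hr : 0 ≤ r)
    (h : ∀ w : ℂ, ‖w‖ = r → ‖f w‖ ≤ C) : maxMod f r ≤ C := by
  refine csSup_le (((sphere_nonempty' hr).image _)) ?_
  rintro y ⟨w, hw, rfl⟩
  exact h w (by simpa [dist_eq_norm] using hw)

lemma maxMod_nonneg (hf : Differentiable ℂ f) {r : ℝ} (hr : 0 ≤ r) : 0 ≤ maxMod f r := by
  obtain ⟨w, hw⟩ := sphere_nonempty' (r := r) hr
  calc (0:ℝ) ≤ ‖f w‖ := by positivity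
  _ ≤ _ := by
      have : ‖w‖ = r := by simpa [dist_eq_norm] using hw
      simpa [this] using abs_le_maxMod hf w

lemma maxMod_mono (hf : Differentiable ℂ f) {a b : ℝ} (ha : 0 ≤ a) (hab : a ≤ b) :
    maxMod f a ≤ maxMod f b := by
  rcases eq_or_lt_of_le (ha.trans hab) with hb | hb
  · have hb0 : b = 0 := hb.symm
    have ha0 : a = 0 := le_antisymm (hab.trans hb0.le) ha
    simp [ha0, hb0]
  refine maxMod_le hf ha fun w hw => ?_
  have hcl : w ∈ closure (Metric.ball (0:ℂ) b) := by
    rw [closure_ball (0:ℂ) (ne_of_gt hb)]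
    simpa [dist_eq_norm] using hw.le.trans hab
  have := Complex.norm_le_of_forall_mem_frontier_norm_le (U := Metric.ball (0:ℂ) b)
    isBounded_ball (hf.diffContOnCl) (C := maxMod f b) ?_ hcl
  · simpa using this
  · intro x hx
    rw [frontier_ball (0:ℂ) (ne_of_gt hb)] at hx
    have hxb : ‖x‖ = b := by simpa [dist_eq_norm] using hx
    simpa [hxb] using abs_le_maxMod hf x

lemma iterMax_nonneg (hf : Differentiable ℂ f) {a : ℝ} (ha : 0 ≤ a) (n : ℕ) :
    0 ≤ (maxMod f)^[n] a := by
  induction n generalizing a with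
  | zero => simpa
  | succ n ih =>
    rw [Function.iterate_succ_apply]
    exact ih (maxMod_nonneg hf ha)

lemma iterMax_mono (hf : Differentiable ℂ f) {a b : ℝ} (ha : 0 ≤ a) (hab : a ≤ b) (n : ℕ) :
    (maxMod f)^[n] a ≤ (maxMod f)^[n] b := by
  induction n generalizing a b with
  | zero => simpa
  | succ n ih =>
    rw [Function.iterate_succ_apply, Function.iterate_succ_apply]
    exact ih (maxMod_nonneg hf ha) (maxMod_mono hf ha hab)

lemma abs_iterate_le (hf : Differentiable ℂ f) (w : ℂ) (n : ℕ) :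
    ‖f^[n] w‖ ≤ (maxMod f)^[n] (‖w‖) := by
  induction n with
  | zero => simp
  | succ n ih =>
    rw [Function.iterate_succ_apply', Function.iterate_succ_apply']
    calc ‖f (f^[n] w)‖ ≤ maxMod f (‖f^[n] w‖) := abs_le_maxMod hf _
    _ ≤ maxMod f ((maxMod f)^[n] (‖w‖)) := maxMod_mono hf (by positivity) ih

section M
variable (hf : Differentiable ℂ f) (hR : 0 < R) (hM : ∀ r ≥ R, r < maxMod f r)
include hf hR hM

lemma Mi_ge_R (k : ℕ) : R ≤ (maxMod f)^[k] R := by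
  induction k with
  | zero => simp
  | succ k ih =>
    rw [Function.iterate_succ_apply']
    exact ih.trans (hM _ ih).le

lemma Mi_lt_succ (k : ℕ) : (maxMod f)^[k] R < (maxMod f)^[k+1] R := by
  rw [Function.iterate_succ_apply']
  exact hM _ (Mi_ge_R hf hR hM k)

lemma Mi_strictMono : StrictMono (fun k => (maxMod f)^[k] R) :=
  strictMono_nat_of_lt_succ (Mi_lt_succ hf hR hM)

lemma Mi_mono {a b : ℕ} (h : a ≤ b) : (maxMod f)^[a] R ≤ (maxMod f)^[b] R :=
  (Mi_strictMono hf hR hM).monotone h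

lemma Mi_pos (k : ℕ) : 0 < (maxMod f)^[k] R := lt_of_lt_of_le hR (Mi_ge_R hf hR hM k)

lemma exists_iter_ge (ρ : ℝ) : ∃ c : ℕ, ρ ≤ (maxMod f)^[c] R := by
  by_contra h
  push_neg at h
  set g : ℕ → ℝ := fun k => (maxMod f)^[k] R with hg
  have hbdd : BddAbove (range g) := ⟨ρ, by rintro y ⟨k, rfl⟩; exact (h k).le⟩
  have hne : (range g).Nonempty := ⟨g 0, 0, rfl⟩
  set s := sSup (range g) with hs
  have hsR : R ≤ s := le_csSup hbdd ⟨0, rfl⟩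
  have hball : ∀ u : ℂ, ‖u‖ < s → ‖f u‖ ≤ s := by
    intro u hu
    obtain ⟨y, ⟨k, rfl⟩, hy⟩ := exists_lt_of_lt_csSup hne hu
    calc ‖f u‖ ≤ maxMod f (‖u‖) := abs_le_maxMod hf u
    _ ≤ maxMod f (g k) := maxMod_mono hf (by positivity) hy.le
    _ = g (k+1) := (Function.iterate_succ_apply' _ _ _).symm
    _ ≤ s := le_csSup hbdd ⟨k+1, rfl⟩
  have hMs : maxMod f s ≤ s := by
    refine maxMod_le hf (le_trans hR.le hsR) fun w hw => ?_
    -- approximate w from inside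
    have hw0 : w ≠ 0 := by
      intro h0
      rw [h0] at hw
      simp at hw
      nlinarith [hR, hsR]
    have htend : Filter.Tendsto (fun t : ℕ => ‖f ((1 - 1/(t+2) : ℝ) • w)‖)
        Filter.atTop (nhds (‖f w‖)) := by
      have h1 : Filter.Tendsto (fun t : ℕ => (1 - 1/(t+2) : ℝ)) Filter.atTop (nhds 1) := by
        have hb : Filter.Tendsto (fun t : ℕ => ((t:ℝ)+2)) Filter.atTop Filter.atTop :=
          Filter.tendsto_atTop_add_const_right _ 2 tendsto_natCast_atTop_atTop
        have := hb.inv_tendsto_atTop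
        simp only [one_div]
        simpa using (tendsto_const_nhds (x := (1:ℝ))).sub this
      have h2 : Filter.Tendsto (fun t : ℕ => ((1 - 1/(t+2) : ℝ) • w)) Filter.atTop (nhds w) := by
        simpa using h1.smul (tendsto_const_nhds (x := w))
      exact (continuous_norm.comp hf.continuous).continuousAt.tendsto.comp h2
    refine le_of_tendsto htend (Filter.Eventually.of_forall fun t => ?_)
    apply hball
    have habs : ‖(1 - 1/(t+2) : ℝ) • w‖ = (1 - 1/(t+2) : ℝ) * s := by
      have h01 : (0:ℝ) ≤ 1 - 1/(t+2) := by
        rw [sub_nonneg]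
        rw [div_le_one (by positivity)]
        linarith
      rw [show ((1 - 1/(t+2) : ℝ) • w) = ((1 - 1/(t+2) : ℝ) : ℂ) * w from Complex.real_smul]
      rw [norm_mul, hw, Complex.norm_real, Real.norm_eq_abs, abs_of_nonneg h01]
    rw [habs]
    have hspos : 0 < s := lt_of_lt_of_le hR hsR
    have : (1 - 1/(t+2) : ℝ) < 1 := by
      have : (0:ℝ) < 1/(t+2) := by positivity
      linarith
    nlinarith
  exact absurd (hM s hsR) (not_lt.mpr hMs)

end M

end Aux

section Level
variable (hf : Differentiable ℂ f) (hR : 0 < R) (hM : ∀ r ≥ R, r < maxMod f r)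
include hf hR hM

omit hf hR hM in
lemma mem_levelSet_neg_iff (m : ℕ) (x : ℂ) :
    x ∈ levelSet f R (-(m:ℤ)) ↔ ∀ k : ℕ, (maxMod f)^[k] R ≤ ‖f^[k+m] x‖ := by
  constructor
  · intro H k
    have h0 : (0:ℤ) ≤ ((k+m : ℕ):ℤ) + (-(m:ℤ)) := by push_cast; omega
    have := H (k+m) h0
    have ht : ((((k+m:ℕ)):ℤ) + (-(m:ℤ))).toNat = k := by omega
    rwa [ht] at this
  · intro H n h0
    obtain ⟨k, rfl⟩ : ∃ k, n = k + m := ⟨n - m, by omega⟩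
    have ht : ((((k+m:ℕ)):ℤ) + (-(m:ℤ))).toNat = k := by omega
    rw [ht]
    exact H k

omit hf hR hM in
lemma mem_levelSet_zero_iff (x : ℂ) :
    x ∈ levelSet f R 0 ↔ ∀ k : ℕ, (maxMod f)^[k] R ≤ ‖f^[k] x‖ := by
  have := mem_levelSet_neg_iff (f := f) (R := R) 0 x
  simpa using this

omit hR hM in
lemma isClosed_levelSet (L : ℤ) : IsClosed (levelSet f R L) := by
  have he : levelSet f R L = ⋂ n : ℕ, {z : ℂ | 0 ≤ (n : ℤ) + L →
      (maxMod f)^[((n : ℤ) + L).toNat] R ≤ ‖f^[n] z‖} := by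
    ext z; simp [levelSet]
  rw [he]
  refine isClosed_iInter fun n => ?_
  by_cases h : 0 ≤ (n : ℤ) + L
  · have he2 : {z : ℂ | 0 ≤ (n : ℤ) + L →
        (maxMod f)^[((n : ℤ) + L).toNat] R ≤ ‖f^[n] z‖}
        = {z : ℂ | (maxMod f)^[((n : ℤ) + L).toNat] R ≤ ‖f^[n] z‖} := by
      ext z; simp [h]
    rw [he2]
    exact isClosed_le continuous_const (continuous_norm.comp (hf.continuous.iterate n))
  · have he2 : {z : ℂ | 0 ≤ (n : ℤ) + L →
        (maxMod f)^[((n : ℤ) + L).toNat] R ≤ ‖f^[n] z‖} = univ := by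
      ext z; simp [h]
    rw [he2]; exact isClosed_univ

lemma levelSet_neg_mono {m m' : ℕ} (h : m ≤ m') :
    levelSet f R (-(m:ℤ)) ⊆ levelSet f R (-(m':ℤ)) := by
  intro x hx
  rw [mem_levelSet_neg_iff] at hx ⊢
  intro k
  have h1 := hx (k + (m' - m))
  rw [show k + (m' - m) + m = k + m' from by omega] at h1
  exact le_trans (Mi_mono hf hR hM (Nat.le_add_right _ _)) h1

lemma levelSet_zero_subset_neg (m : ℕ) : levelSet f R 0 ⊆ levelSet f R (-(m:ℤ)) := by
  have h2 := levelSet_neg_mono hf hR hM (Nat.zero_le m)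
  rw [show (-((0:ℕ):ℤ)) = (0:ℤ) by simp] at h2
  exact h2

omit hf hR hM in
lemma abs_ge_of_mem_levelSet_nonneg (n : ℕ) {x : ℂ} (hx : x ∈ levelSet f R (n:ℤ)) :
    (maxMod f)^[n] R ≤ ‖x‖ := by
  have h0 : (0:ℤ) ≤ ((0:ℕ):ℤ) + (n:ℤ) := by omega
  have := hx 0 h0
  have ht : (((0:ℕ):ℤ) + (n:ℤ)).toNat = n := by omega
  rwa [ht, Function.iterate_zero_apply] at this

omit hf hR hM in
lemma iterate_mem_levelSet_nonneg (n : ℕ) {w : ℂ} (hw : w ∈ levelSet f R 0) :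
    f^[n] w ∈ levelSet f R (n:ℤ) := by
  intro k _
  have ht : (((k:ℕ):ℤ) + (n:ℤ)).toNat = k + n := by omega
  rw [ht, ← Function.iterate_add_apply]
  exact (mem_levelSet_zero_iff (f := f) (R := R) w).mp hw (k+n)

lemma mem_levelSet_neg_of_iterate (t n : ℕ) {x : ℂ} (h : f^[t] x ∈ levelSet f R (n:ℤ)) :
    x ∈ levelSet f R (-(t:ℤ)) := by
  rw [mem_levelSet_neg_iff]
  intro k
  have h0 : (0:ℤ) ≤ ((k:ℕ):ℤ) + (n:ℤ) := by omega
  have := h k h0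
  have ht : (((k:ℕ):ℤ) + (n:ℤ)).toNat = k + n := by omega
  rw [ht, ← Function.iterate_add_apply] at this
  exact le_trans (Mi_mono hf hR hM (Nat.le_add_right _ _)) this

omit hf hR hM in
lemma levelSet_neg_subset_fast (m : ℕ) : levelSet f R (-(m:ℤ)) ⊆ fastEscaping f R := by
  intro x hx
  exact ⟨m, (mem_levelSet_neg_iff m x).mp hx⟩

omit hf hR hM in
lemma exists_levelSet_neg_of_fast {x : ℂ} (hx : x ∈ fastEscaping f R) :
    ∃ m : ℕ, x ∈ levelSet f R (-(m:ℤ)) := by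
  obtain ⟨L, hL⟩ := hx
  exact ⟨L, (mem_levelSet_neg_iff L x).mpr hL⟩

end Level

section OpenMap

lemma isOpenMap_of_nonconst {g : ℂ → ℂ} (hg : Differentiable ℂ g)
    (h : ¬ ∃ c, ∀ x, g x = c) : IsOpenMap g := by
  rcases (hg.differentiableOn.analyticOnNhd isOpen_univ).is_constant_or_isOpen
    isPreconnected_univ with hcase | hcase
  · obtain ⟨w, hw⟩ := hcase
    exact absurd ⟨w, fun x => hw x (mem_univ x)⟩ h
  · intro s hs
    exact hcase s (subset_univ s) hs

lemma iterate_not_const (hfc : TranscEntire f) (n : ℕ) : ¬ ∃ c : ℂ, ∀ x : ℂ, f^[n] x = c := by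
  induction n with
  | zero =>
    rintro ⟨c, hc⟩
    have h0 := hc 0
    have h1 := hc 1
    simp only [Function.iterate_zero_apply] at h0 h1
    exact one_ne_zero (h1.trans h0.symm)
  | succ n ih =>
    rintro ⟨c, hc⟩
    have hopen : IsOpenMap (f^[n]) := isOpenMap_of_nonconst (hfc.1.iterate n) ih
    have hS : IsOpen (range (f^[n])) := hopen.isOpen_range
    have hmem : f^[n] 0 ∈ range (f^[n]) := ⟨0, rfl⟩
    have heq : f =ᶠ[nhds (f^[n] 0)] (fun _ => c) := by
      refine Filter.eventually_of_mem (hS.mem_nhds hmem) ?_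
      rintro _ ⟨x, rfl⟩
      have := hc x
      rwa [Function.iterate_succ_apply'] at this
    have hid := (hfc.1.differentiableOn.analyticOnNhd isOpen_univ).eqOn_of_preconnected_of_eventuallyEq
      (analyticOnNhd_const (v := c)) isPreconnected_univ (mem_univ (f^[n] 0)) heq
    exact hfc.2 ⟨Polynomial.C c, fun z => by simpa using hid (mem_univ z)⟩

lemma isOpenMap_iterate (hfc : TranscEntire f) (n : ℕ) : IsOpenMap (f^[n]) :=
  isOpenMap_of_nonconst (hfc.1.iterate n) (iterate_not_const hfc n)

end OpenMap

lemma subset_of_avoid_frontier {S T : Set ℂ} (hT : IsOpen T) (hS : IsPreconnected S)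
    (hd : Disjoint S (frontier T)) (hne : (S ∩ T).Nonempty) : S ⊆ T := by
  refine IsPreconnected.subset_left_of_subset_union (v := (closure T)ᶜ) hT
    isClosed_closure.isOpen_compl (disjoint_compl_right.mono_left subset_closure) ?_ hne hS
  intro x hx
  by_cases hxc : x ∈ closure T
  · left
    by_contra hxT
    exact absurd (⟨hxc, by rwa [hT.interior_eq]⟩ : x ∈ frontier T) (disjoint_left.mp hd hx)
  · right; exact hxc

lemma isPreconnected_iInter_nested {K : ℕ → Set ℂ} (hcp : ∀ m, IsCompact (K m))
    (hconn : ∀ m, IsPreconnected (K m)) (hanti : Antitone K) :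
    IsPreconnected (⋂ m, K m) := by
  rw [isPreconnected_iff_subset_of_disjoint]
  intro u v hu hv hsub hdisj
  set C := ⋂ m, K m with hC
  by_contra hcon
  push_neg at hcon
  obtain ⟨hnu, hnv⟩ := hcon
  obtain ⟨a, ha, hau⟩ := not_subset.mp hnu
  obtain ⟨b, hb, hbv⟩ := not_subset.mp hnv
  have hav : a ∈ v := by
    rcases hsub ha with h | h
    · exact absurd h hau
    · exact h
  have hbu : b ∈ u := by
    rcases hsub hb with h | h
    · exact h
    · exact absurd h hbv
  -- A = C \ v (⊆ u) and B = C \ u (⊆ v) are disjoint compacts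
  have hCclosed : IsClosed C := isClosed_iInter fun m => (hcp m).isClosed
  have hCcompact : IsCompact C := (hcp 0).of_isClosed_subset hCclosed (iInter_subset _ 0)
  set A := C ∩ vᶜ with hA
  set B := C ∩ uᶜ with hB
  have hAcp : IsCompact A := hCcompact.inter_right hv.isClosed_compl
  have hBcp : IsCompact B := hCcompact.inter_right hu.isClosed_compl
  have hAB : Disjoint A B := by
    rw [disjoint_left]
    rintro x ⟨hxC, hxv⟩ ⟨_, hxu⟩
    rcases hsub hxC with h | h
    · exact hxu h
    · exact hxv h
  obtain ⟨u', v', hu', hv', hAu', hBv', huv'⟩ :=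
    SeparatedNhds.of_isCompact_isCompact hAcp hBcp hAB
  -- some K m is inside u' ∪ v'
  have hsub' : C ⊆ u' ∪ v' := by
    intro x hx
    by_cases hxv : x ∈ v
    · by_cases hxu : x ∈ u
      · exfalso
        have hxx : x ∈ C ∩ (u ∩ v) := ⟨hx, hxu, hxv⟩
        rw [hdisj] at hxx
        exact notMem_empty x hxx
      · exact Or.inr (hBv' ⟨hx, hxu⟩)
    · exact Or.inl (hAu' ⟨hx, hxv⟩)
  have hMm : ∃ m, K m ⊆ u' ∪ v' := by
    by_contra hno
    push_neg at hno
    have hnon : (⋂ m, K m \ (u' ∪ v')).Nonempty := by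
      refine IsCompact.nonempty_iInter_of_directed_nonempty_isCompact_isClosed _ ?_ ?_ ?_ ?_
      · intro i j
        exact ⟨max i j, diff_subset_diff_left (hanti (le_max_left _ _)),
          diff_subset_diff_left (hanti (le_max_right _ _))⟩
      · intro m
        obtain ⟨x, hx1, hx2⟩ := not_subset.mp (hno m)
        exact ⟨x, hx1, hx2⟩
      · exact fun m => (hcp m).inter_right (hu'.union hv').isClosed_compl
      · exact fun m => ((hcp m).isClosed).inter (hu'.union hv').isClosed_compl
    obtain ⟨x, hx⟩ := hnon
    rw [mem_iInter] at hx
    have hxC : x ∈ C := mem_iInter.mpr fun m => (hx m).1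
    exact (hx 0).2 (hsub' hxC)
  obtain ⟨m, hm⟩ := hMm
  have hwit := (hconn m) u' v' hu' hv' hm
    ⟨b, (iInter_subset K m) hb, hAu' ⟨hb, hbv⟩⟩
    ⟨a, (iInter_subset K m) ha, hBv' ⟨ha, hau⟩⟩
  obtain ⟨x, -, hx2⟩ := hwit
  exact disjoint_left.mp huv' hx2.1 hx2.2


lemma frontier_iterate_image_subset (hfc : TranscEntire f) {G : Set ℂ} (hGo : IsOpen G)
    (hGb : IsBounded G) (n : ℕ) :
    frontier (f^[n] '' G) ⊆ f^[n] '' (frontier G) := by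
  have himg : IsOpen (f^[n] '' G) := isOpenMap_iterate hfc n G hGo
  have hclcp : IsCompact (closure G) :=
    Metric.isCompact_of_isClosed_isBounded isClosed_closure hGb.closure
  have hsub : closure (f^[n] '' G) ⊆ f^[n] '' closure G :=
    closure_minimal (image_mono subset_closure)
      (hclcp.image (hfc.1.continuous.iterate n)).isClosed
  intro x hx
  obtain ⟨u, hu, rfl⟩ := hsub hx.1
  have hunG : u ∉ G := by
    intro huG
    exact hx.2 (by rw [himg.interior_eq]; exact mem_image_of_mem _ huG)
  exact ⟨u, ⟨hu, by rwa [hGo.interior_eq]⟩, rfl⟩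

lemma ball_subset_iterate_image (hfc : TranscEntire f) (hR : 0 < R)
    (hM : ∀ r ≥ R, r < maxMod f r) {G : Set ℂ} (hGo : IsOpen G) (hGb : IsBounded G)
    (hG0 : Metric.closedBall (0:ℂ) R ⊆ G) (hGf : frontier G ⊆ levelSet f R 0) (n : ℕ) :
    Metric.ball (0:ℂ) ((maxMod f)^[n] R) ⊆ f^[n] '' G := by
  set img := f^[n] '' G with himg_def
  have himg : IsOpen img := isOpenMap_iterate hfc n G hGo
  have hfr : frontier img ⊆ f^[n] '' (frontier G) := frontier_iterate_image_subset hfc hGo hGb n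
  have hfr2 : ∀ x ∈ frontier img, (maxMod f)^[n] R ≤ ‖x‖ := by
    intro x hx
    obtain ⟨u, hu, rfl⟩ := hfr hx
    exact abs_ge_of_mem_levelSet_nonneg n (iterate_mem_levelSet_nonneg n (hGf hu))
  have hdisj : Disjoint (Metric.ball (0:ℂ) ((maxMod f)^[n] R)) (frontier img) := by
    rw [disjoint_left]
    intro x hx1 hx2
    have h1 := hfr2 x hx2
    rw [mem_ball, dist_zero_right] at hx1
    linarith
  have h0G : (0:ℂ) ∈ G := hG0 (by simp [hR.le])
  have hw0 : f^[n] 0 ∈ img := mem_image_of_mem _ h0G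
  have hw0abs : ‖f^[n] 0‖ ≤ (maxMod f)^[n] R := by
    calc ‖f^[n] 0‖ ≤ (maxMod f)^[n] ‖(0:ℂ)‖ := abs_iterate_le hfc.1 0 n
    _ = (maxMod f)^[n] 0 := by simp
    _ ≤ (maxMod f)^[n] R := iterMax_mono hfc.1 le_rfl hR.le n
  have hpt : ∃ w, w ∈ img ∩ Metric.ball (0:ℂ) ((maxMod f)^[n] R) := by
    rcases lt_or_eq_of_le hw0abs with hlt | heq
    · refine ⟨f^[n] 0, hw0, ?_⟩
      rw [mem_ball, dist_zero_right]
      exact hlt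
    · obtain ⟨ε, hε, hball⟩ := Metric.isOpen_iff.mp himg _ hw0
      set w0 := f^[n] 0 with hw0def
      have hw0pos : 0 < ‖w0‖ := by rw [heq]; exact Mi_pos hfc.1 hR hM n
      set θ : ℝ := min (ε / (2 * ‖w0‖)) 2⁻¹ with hθ
      have hθpos : 0 < θ := lt_min (by positivity) (by norm_num)
      have hθlt : θ < 1 := lt_of_le_of_lt (min_le_right _ _) (by norm_num)
      refine ⟨((1 - θ : ℝ) : ℂ) * w0, hball ?_, ?_⟩
      · rw [mem_ball]
        have he : ((1 - θ:ℝ):ℂ) * w0 - w0 = ((-θ:ℝ):ℂ) * w0 := by push_cast; ring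
        rw [Complex.dist_eq, he, norm_mul, Complex.norm_real, Real.norm_eq_abs, abs_neg, abs_of_pos hθpos]
        have h1 : θ * ‖w0‖ ≤ (ε / (2 * ‖w0‖)) * ‖w0‖ :=
          mul_le_mul_of_nonneg_right (min_le_left _ _) (by positivity)
        have h2 : (ε / (2 * ‖w0‖)) * ‖w0‖ = ε/2 := by field_simp
        calc θ * ‖w0‖ ≤ ε/2 := by rw [← h2]; exact h1
        _ < ε := by linarith
      · rw [mem_ball, dist_zero_right]
        rw [norm_mul, Complex.norm_real, Real.norm_eq_abs, abs_of_pos (by linarith : (0:ℝ) < 1 - θ)]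
        calc (1-θ) * ‖w0‖ < 1 * ‖w0‖ := by nlinarith
        _ = ‖w0‖ := one_mul _
        _ = _ := heq
  obtain ⟨w, hw⟩ := hpt
  exact subset_of_avoid_frontier himg (convex_ball (0:ℂ) _).isPreconnected hdisj ⟨w, hw.2, hw.1⟩

/-- every neighbourhood of a component `K` of `A(f)ᶜ` contains a closed
subset of `A(f)` surrounding `K`. -/
theorem stmt_9 (f : ℂ → ℂ) (R : ℝ) (hf : TranscEntire f) (hR : 0 < R)
    (hM : ∀ r ≥ R, r < maxMod f r) (hweb : SpidersWeb (levelSet f R 0))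
    (K : Set ℂ) (hK : IsCompOf K (fastEscaping f R)ᶜ) :
    ∀ V : Set ℂ, IsOpen V → K ⊆ V →
      ∃ X : Set ℂ, X ⊆ V ∧ IsClosed X ∧ X ⊆ fastEscaping f R ∧
        ∃ C : Set ℂ, IsCompOf C Xᶜ ∧ Bornology.IsBounded C ∧ K ⊆ C := by
  intro V hV hKV
  obtain ⟨z, hz, hKdef⟩ := hK
  obtain ⟨-, G, hG, hGuniv⟩ := hweb
  have hGmono : Monotone G := monotone_nat_of_le_succ (fun n => (hG n).2.2.2.2.1)
  have hcomp : IsCompact (insert z (Metric.closedBall (0:ℂ) R)) :=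
    (isCompact_closedBall _ _).insert z
  obtain ⟨N, hN⟩ := hcomp.elim_directed_cover G (fun n => (hG n).1)
    (by rw [hGuniv]; exact subset_univ _) hGmono.directed_le
  set 𝒢 := G N with h𝒢
  have h𝒢o : IsOpen 𝒢 := (hG N).1
  have h𝒢b : IsBounded 𝒢 := (hG N).2.2.1
  have h𝒢f : frontier 𝒢 ⊆ levelSet f R 0 := (hG N).2.2.2.2.2
  have hz𝒢 : z ∈ 𝒢 := hN (mem_insert _ _)
  have hball𝒢 : Metric.closedBall (0:ℂ) R ⊆ 𝒢 := fun x hx => hN (mem_insert_of_mem _ hx)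
  obtain ⟨ρ0', hρ0'⟩ := h𝒢b.subset_closedBall (0:ℂ)
  set ρ0 := max ρ0' 0 with hρ0def
  have hρ0 : closure 𝒢 ⊆ Metric.closedBall (0:ℂ) ρ0 :=
    closure_minimal (hρ0'.trans (closedBall_subset_closedBall (le_max_left _ _)))
      Metric.isClosed_closedBall
  obtain ⟨c, hc⟩ := exists_iter_ge hf.1 hR hM ρ0
  have hdips : ∀ i : ℕ, ∃ n : ℕ, ‖f^[n+i] z‖ < (maxMod f)^[n] R := by
    intro i
    by_contra h
    push_neg at h
    exact hz ⟨i, h⟩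
  set E : ℕ → Set ℂ := fun m => levelSet f R (-(m:ℤ)) with hE
  have hEclosed : ∀ m, IsClosed (E m) := fun m => isClosed_levelSet hf.1 _
  have hEfast : ∀ m, E m ⊆ fastEscaping f R := fun m => levelSet_neg_subset_fast m
  have hzE : ∀ m, z ∈ (E m)ᶜ := fun m h => hz (hEfast m h)
  set U : ℕ → Set ℂ := fun m => connectedComponentIn (E m)ᶜ z with hU
  have hUopen : ∀ m, IsOpen (U m) := fun m => (hEclosed m).isOpen_compl.connectedComponentIn
  have hUconn : ∀ m, IsPreconnected (U m) := fun m => isPreconnected_connectedComponentIn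
  have hzU : ∀ m, z ∈ U m := fun m => mem_connectedComponentIn (hzE m)
  have hUanti : Antitone U := by
    apply antitone_nat_of_succ_le
    intro m
    exact connectedComponentIn_mono z
      (compl_subset_compl.mpr (levelSet_neg_mono hf.1 hR hM (Nat.le_succ m)))
  have hUG : ∀ m, U m ⊆ 𝒢 := by
    intro m
    refine subset_of_avoid_frontier h𝒢o (hUconn m) ?_ ⟨z, hzU m, hz𝒢⟩
    rw [disjoint_left]
    intro x hx hfx
    exact (connectedComponentIn_subset _ _ hx)
      (levelSet_zero_subset_neg hf.1 hR hM m (h𝒢f hfx))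
  set Cl : ℕ → Set ℂ := fun m => closure (U m) with hCl
  have hClcp : ∀ m, IsCompact (Cl m) := fun m =>
    Metric.isCompact_of_isClosed_isBounded isClosed_closure ((h𝒢b.subset (hUG m)).closure)
  have hClconn : ∀ m, IsPreconnected (Cl m) := fun m => (hUconn m).closure
  have hClanti : Antitone Cl := fun a b hab => closure_mono (hUanti hab)
  set CC := ⋂ m, Cl m with hCC
  have hzCC : z ∈ CC := mem_iInter.mpr fun m => subset_closure (hzU m)
  -- Claim A : no point of CC is fast escaping
  have hclaimA : ∀ p ∈ CC, p ∉ fastEscaping f R := by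
    intro p hpC hpF
    obtain ⟨j, hj⟩ := exists_levelSet_neg_of_fast hpF
    rw [mem_levelSet_neg_iff] at hj
    obtain ⟨n, hn⟩ := hdips (j + c + 1)
    set t := n + (j + c + 1) with ht
    set y := f^[t] z with hy
    have hylt : ‖y‖ < (maxMod f)^[n] R := hn
    have hynot : y ∉ levelSet f R (n:ℤ) := fun h =>
      absurd (abs_ge_of_mem_levelSet_nonneg n h) (not_le.mpr hylt)
    set VV := connectedComponentIn (levelSet f R (n:ℤ))ᶜ y with hVV
    have himgball := ball_subset_iterate_image hf hR hM h𝒢o h𝒢b hball𝒢 h𝒢f n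
    have himgopen : IsOpen (f^[n] '' 𝒢) := isOpenMap_iterate hf n 𝒢 h𝒢o
    have hVVsub : VV ⊆ f^[n] '' 𝒢 := by
      refine subset_of_avoid_frontier himgopen isPreconnected_connectedComponentIn ?_ ?_
      · rw [disjoint_left]
        intro x hx hfx
        obtain ⟨u, hu, rfl⟩ := frontier_iterate_image_subset hf h𝒢o h𝒢b n hfx
        exact (connectedComponentIn_subset _ _ hx) (iterate_mem_levelSet_nonneg n (h𝒢f hu))
      · refine ⟨y, mem_connectedComponentIn hynot, himgball ?_⟩
        rw [mem_ball, dist_zero_right]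
        exact hylt
    have himageU : f^[t] '' (U t) ⊆ VV := by
      refine IsPreconnected.subset_connectedComponentIn
        ((hUconn t).image _ (hf.1.continuous.iterate t).continuousOn)
        ⟨z, hzU t, rfl⟩ ?_
      rintro _ ⟨u, hu, rfl⟩ hlev
      exact (connectedComponentIn_subset _ _ hu)
        (mem_levelSet_neg_of_iterate hf.1 hR hM t n hlev)
    have hpcl : f^[t] p ∈ closure VV := by
      have h1 : p ∈ closure (U t) := mem_iInter.mp hpC t
      have h3 : f^[t] '' closure (U t) ⊆ closure (f^[t] '' (U t)) :=
        image_closure_subset_closure_image (hf.1.continuous.iterate t)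
      exact closure_mono himageU (h3 (mem_image_of_mem _ h1))
    have hub : ‖f^[t] p‖ ≤ (maxMod f)^[n+c] R := by
      have h4 : closure VV ⊆ f^[n] '' closure 𝒢 := by
        refine (closure_mono hVVsub).trans ?_
        exact closure_minimal (image_mono subset_closure)
          ((Metric.isCompact_of_isClosed_isBounded isClosed_closure h𝒢b.closure).image
            (hf.1.continuous.iterate n)).isClosed
      obtain ⟨u, hu, heq⟩ := h4 hpcl
      have h5 : ‖u‖ ≤ ρ0 := by
        have := hρ0 hu
        rwa [Metric.mem_closedBall, dist_zero_right] at this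
      calc ‖f^[t] p‖ = ‖f^[n] u‖ := by rw [heq]
      _ ≤ (maxMod f)^[n] (‖u‖) := abs_iterate_le hf.1 u n
      _ ≤ (maxMod f)^[n] ρ0 := iterMax_mono hf.1 (by positivity) h5 n
      _ ≤ (maxMod f)^[n] ((maxMod f)^[c] R) := iterMax_mono hf.1 (le_max_right _ _) hc n
      _ = (maxMod f)^[n+c] R := (Function.iterate_add_apply _ n c R).symm
    have hlb : (maxMod f)^[n+c+1] R ≤ ‖f^[t] p‖ := by
      have h6 := hj (n+c+1)
      rwa [show n+c+1+j = t by omega] at h6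
    have h7 := Mi_lt_succ hf.1 hR hM (n+c)
    linarith
  have hCCconn : IsPreconnected CC := isPreconnected_iInter_nested hClcp hClconn hClanti
  have hCCK : CC ⊆ K := by
    rw [hKdef]
    exact IsPreconnected.subset_connectedComponentIn hCCconn hzCC (fun x hx => hclaimA x hx)
  have hfind : ∃ m, Cl m ⊆ V := by
    by_contra h
    push_neg at h
    have hnon : (⋂ m, Cl m ∩ Vᶜ).Nonempty := by
      refine IsCompact.nonempty_iInter_of_directed_nonempty_isCompact_isClosed _ ?_ ?_ ?_ ?_
      · intro i j
        exact ⟨max i j, inter_subset_inter_left _ (hClanti (le_max_left _ _)),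
          inter_subset_inter_left _ (hClanti (le_max_right _ _))⟩
      · intro m
        obtain ⟨x, hx1, hx2⟩ := not_subset.mp (h m)
        exact ⟨x, hx1, hx2⟩
      · exact fun m => (hClcp m).inter_right hV.isClosed_compl
      · exact fun m => isClosed_closure.inter hV.isClosed_compl
    obtain ⟨x, hx⟩ := hnon
    rw [mem_iInter] at hx
    have hxCC : x ∈ CC := mem_iInter.mpr fun m => (hx m).1
    exact (hx 0).2 (hKV (hCCK hxCC))
  obtain ⟨m, hm⟩ := hfind
  have hzfc : z ∈ (frontier (U m))ᶜ := by
    intro hzf2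
    exact hzf2.2 (by rw [(hUopen m).interior_eq]; exact hzU m)
  refine ⟨frontier (U m), fun x hx => hm (frontier_subset_closure hx), isClosed_frontier,
    ?_, U m, ⟨z, hzfc, ?_⟩, h𝒢b.subset (hUG m), ?_⟩
  · -- frontier (U m) ⊆ fastEscaping f R
    intro x hx
    refine hEfast m ?_
    by_contra hxE
    have hx1 : x ∈ closure (U m) := frontier_subset_closure hx
    have hx2 : x ∉ U m := fun hxU => hx.2 (by rwa [(hUopen m).interior_eq])
    have hins : IsPreconnected (insert x (U m)) := by
      refine IsPreconnected.subset_closure (hUconn m) (subset_insert _ _) ?_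
      intro w hw
      rcases hw with rfl | hw
      · exact hx1
      · exact subset_closure hw
    have hsub2 : insert x (U m) ⊆ (E m)ᶜ := by
      intro w hw
      rcases hw with rfl | hw
      · exact hxE
      · exact connectedComponentIn_subset _ _ hw
    have h8 := IsPreconnected.subset_connectedComponentIn hins
      (mem_insert_of_mem x (hzU m)) hsub2
    exact hx2 (h8 (mem_insert x _))
  · -- U m = connectedComponentIn (frontier (U m))ᶜ z
    apply Subset.antisymm
    · refine IsPreconnected.subset_connectedComponentIn (hUconn m) (hzU m) ?_
      intro w hw hfw
      exact hfw.2 (by rwa [(hUopen m).interior_eq])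
    · refine subset_of_avoid_frontier (hUopen m) isPreconnected_connectedComponentIn ?_
        ⟨z, mem_connectedComponentIn hzfc, hzU m⟩
      rw [disjoint_left]
      exact fun x hx hfx => (connectedComponentIn_subset _ _ hx) hfx
  · -- K ⊆ U m
    rw [hKdef]
    exact connectedComponentIn_mono z (compl_subset_compl.mpr (hEfast m))
end

section
/- Let f be a transcendental entire function, let R > 0 be such that M(r, f) > r for all r ≥ R, and suppose that A_R(f) is a spider's web. Let (H_m)_{m≥0} and (L_m)_{m≥0} be the sequences of fundamental holes and loops for A_R(f). Then for every n ∈ ℕ with n ≥ 1 and every m ≥ 0, f^n(H_m) = H_{m+n} and f^n(L_m) = L_{m+n}. -/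
open Set Metric Topology Function Bornology

/-! ### Auxiliary lemmas -/

section Aux

variable {f : ℂ → ℂ} {R : ℝ}

/-- A transcendental entire function is not (eventually) constant. -/
lemma TranscEntire.not_eventually_const (hf : TranscEntire f) {z₀ : ℂ} {c : ℂ}
    (h : f =ᶠ[nhds z₀] fun _ => c) : False := by
  have hA : AnalyticOnNhd ℂ f univ := Complex.analyticOnNhd_univ_iff_differentiable.mpr hf.1
  have hA' : AnalyticOnNhd ℂ (fun _ : ℂ => c) univ := fun z _ => analyticAt_const
  have hall : ∀ w, f w = c := fun w =>
    hA.eqOn_of_preconnected_of_eventuallyEq hA' isPreconnected_univ (mem_univ z₀) h (mem_univ w)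
  exact hf.2 ⟨Polynomial.C c, fun w => by simp [hall w]⟩

/-- Maximum modulus principle: bound inside the disk. -/
lemma le_maxMod (hf : TranscEntire f) {r : ℝ} (hr : 0 < r) {z : ℂ}
    (hz : ‖z‖ ≤ r) : ‖f z‖ ≤ maxMod f r := by
  have hb : IsBounded (ball (0 : ℂ) r) := isBounded_ball
  have hd : DiffContOnCl ℂ f (ball (0 : ℂ) r) := hf.1.diffContOnCl
  have hbdd : BddAbove ((fun z => ‖f z‖) '' sphere (0 : ℂ) r) :=
    ((isCompact_sphere (0 : ℂ) r).image
      (continuous_norm.comp hf.1.continuous)).bddAbove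
  have hfr : ∀ w ∈ frontier (ball (0 : ℂ) r), ‖f w‖ ≤ maxMod f r := by
    rw [frontier_ball _ hr.ne']
    intro w hw
    exact le_csSup hbdd ⟨w, hw, rfl⟩
  have hzc : z ∈ closure (ball (0 : ℂ) r) := by
    rw [closure_ball _ hr.ne']
    simpa [Complex.dist_eq] using hz
  simpa using
    Complex.norm_le_of_forall_mem_frontier_norm_le hb hd hfr hzc

/-- Strict maximum modulus principle for a nonconstant entire function. -/
lemma lt_maxMod (hf : TranscEntire f) {r : ℝ} (hr : 0 < r) {z : ℂ}
    (hz : ‖z‖ < r) : ‖f z‖ < maxMod f r := by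
  rcases lt_or_ge (‖f z‖) (maxMod f r) with h | h
  · exact h
  exfalso
  have hzb : z ∈ ball (0 : ℂ) r := by
    simpa [Complex.dist_eq] using hz
  have hmax : IsMaxOn (norm ∘ f) (ball (0 : ℂ) r) z := by
    intro w hw
    have hw' : ‖w‖ ≤ r := by
      have := mem_ball_zero_iff.mp hw
      exact this.le
    simp only [Function.comp_apply, mem_setOf_eq]
    exact (le_maxMod hf hr hw').trans h
  have heq := Complex.eqOn_of_isPreconnected_of_isMaxOn_norm
    (convex_ball (0 : ℂ) r).isPreconnected isOpen_ball hf.1.differentiableOn hzb hmax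
  exact hf.not_eventually_const
    (Filter.eventuallyEq_of_mem (isOpen_ball.mem_nhds hzb) heq)

/-- A transcendental entire function is an open map. -/
lemma TranscEntire.isOpenMap (hf : TranscEntire f) : IsOpenMap f := by
  rw [isOpenMap_iff_nhds_le]
  intro z
  have hA : AnalyticAt ℂ f z :=
    (Complex.analyticOnNhd_univ_iff_differentiable.mpr hf.1) z (mem_univ z)
  rcases hA.eventually_constant_or_nhds_le_map_nhds with h | h
  · exact absurd h (fun h => hf.not_eventually_const h)
  · exact h

variable (hR : 0 < R) (hM : ∀ r ≥ R, r < maxMod f r)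

lemma iter_ge (hR : 0 < R) (hM : ∀ r ≥ R, r < maxMod f r) :
    ∀ k : ℕ, R ≤ (maxMod f)^[k] R := by
  intro k
  induction k with
  | zero => simp
  | succ k ih =>
    rw [Function.iterate_succ_apply']
    exact ih.trans (hM _ ih).le

lemma iter_pos (hR : 0 < R) (hM : ∀ r ≥ R, r < maxMod f r) (k : ℕ) :
    0 < (maxMod f)^[k] R :=
  hR.trans_le (iter_ge hR hM k)

lemma iter_lt_succ (hR : 0 < R) (hM : ∀ r ≥ R, r < maxMod f r) (k : ℕ) :
    (maxMod f)^[k] R < (maxMod f)^[k + 1] R := by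
  rw [Function.iterate_succ_apply']
  exact hM _ (iter_ge hR hM k)

lemma iter_mono (hR : 0 < R) (hM : ∀ r ≥ R, r < maxMod f r) :
    ∀ {j k : ℕ}, j ≤ k → (maxMod f)^[j] R ≤ (maxMod f)^[k] R := by
  intro j k h
  induction k with
  | zero => simp_all
  | succ k ih =>
    rcases Nat.le_succ_iff.mp h with h' | h'
    · exact (ih h').trans (iter_lt_succ hR hM k).le
    · exact le_of_eq (by rw [h'])

/-- Membership in a nonnegative level set, in `ℕ`-indexed form. -/
lemma mem_levelSet_nat {m : ℕ} {z : ℂ} :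
    z ∈ levelSet f R (m : ℤ) ↔
      ∀ n : ℕ, (maxMod f)^[n + m] R ≤ ‖f^[n] z‖ := by
  constructor
  · intro h n
    have h2 := h n (by omega)
    rwa [show ((n : ℤ) + (m : ℤ)).toNat = n + m by omega] at h2
  · intro h n _
    rw [show ((n : ℤ) + (m : ℤ)).toNat = n + m by omega]
    exact h n

lemma levelSet_closed (hf : TranscEntire f) (L : ℤ) : IsClosed (levelSet f R L) := by
  have : levelSet f R L = ⋂ n : ℕ, {z : ℂ | 0 ≤ (n : ℤ) + L →
      (maxMod f)^[((n : ℤ) + L).toNat] R ≤ ‖f^[n] z‖} := by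
    ext z; simp [levelSet, mem_iInter]
  rw [this]
  refine isClosed_iInter fun n => ?_
  by_cases h : 0 ≤ (n : ℤ) + L
  · have : {z : ℂ | 0 ≤ (n : ℤ) + L →
        (maxMod f)^[((n : ℤ) + L).toNat] R ≤ ‖f^[n] z‖} =
        {z : ℂ | (maxMod f)^[((n : ℤ) + L).toNat] R ≤ ‖f^[n] z‖} := by
      ext z; simp [h]
    rw [this]
    exact isClosed_le continuous_const
      (continuous_norm.comp (hf.1.continuous.iterate n))
  · have : {z : ℂ | 0 ≤ (n : ℤ) + L →
        (maxMod f)^[((n : ℤ) + L).toNat] R ≤ ‖f^[n] z‖} = univ := by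
      ext z; simp [h]
    rw [this]
    exact isClosed_univ

lemma abs_ge_of_mem_levelSet (hR : 0 < R) (hM : ∀ r ≥ R, r < maxMod f r) {m : ℕ} {z : ℂ}
    (h : z ∈ levelSet f R (m : ℤ)) : (maxMod f)^[m] R ≤ ‖z‖ := by
  have := mem_levelSet_nat.mp h 0
  simpa using this

lemma zero_not_mem_levelSet (hR : 0 < R) (hM : ∀ r ≥ R, r < maxMod f r) (m : ℕ) :
    (0 : ℂ) ∉ levelSet f R (m : ℤ) := by
  intro h
  have h1 := abs_ge_of_mem_levelSet hR hM h
  simp only [norm_zero] at h1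
  exact absurd h1 (not_le.mpr (by simpa using (iter_pos hR hM m)))

lemma levelSet_maps_to {m : ℕ} {z : ℂ} (h : z ∈ levelSet f R (m : ℤ)) :
    f z ∈ levelSet f R ((m + 1 : ℕ) : ℤ) := by
  rw [mem_levelSet_nat] at h ⊢
  intro n
  have := h (n + 1)
  rw [Function.iterate_succ_apply] at this
  rwa [show n + (m + 1) = n + 1 + m by omega]

end Aux

section Key

variable {f : ℂ → ℂ} {R : ℝ}

/-- The key step: `f` maps the `m`-th fundamental hole onto the `(m+1)`-st one,
and similarly for the loops; moreover boundedness propagates. -/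
lemma keyStep (hf : TranscEntire f) (hR : 0 < R) (hM : ∀ r ≥ R, r < maxMod f r) (m : ℕ)
    (hb : IsBounded (fundHole f R (m : ℤ))) :
    f '' fundHole f R (m : ℤ) = fundHole f R ((m + 1 : ℕ) : ℤ) ∧
    f '' frontier (fundHole f R (m : ℤ)) = frontier (fundHole f R ((m + 1 : ℕ) : ℤ)) ∧
    IsBounded (fundHole f R ((m + 1 : ℕ) : ℤ)) := by
  have hc : Continuous f := hf.1.continuous
  set E0 := levelSet f R (m : ℤ) with hE0def
  set E1 := levelSet f R ((m + 1 : ℕ) : ℤ) with hE1def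
  set U := fundHole f R (m : ℤ) with hUdef
  have hE0closed : IsClosed E0 := levelSet_closed hf _
  have hE1closed : IsClosed E1 := levelSet_closed hf _
  have h0m : (0 : ℂ) ∈ E0ᶜ := zero_not_mem_levelSet hR hM m
  have h0m1 : (0 : ℂ) ∈ E1ᶜ := zero_not_mem_levelSet hR hM (m + 1)
  have hUopen : IsOpen U := hE0closed.isOpen_compl.connectedComponentIn
  have hU0 : (0 : ℂ) ∈ U := mem_connectedComponentIn h0m
  have hUconn : IsConnected U := isConnected_connectedComponentIn_iff.mpr h0m
  have hUsub : U ⊆ E0ᶜ := connectedComponentIn_subset _ _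
  -- the frontier of the hole is contained in the level set
  have frontier_sub : frontier U ⊆ E0 := by
    intro x hx
    by_contra hxE
    have hxE' : x ∈ E0ᶜ := hxE
    set V := connectedComponentIn E0ᶜ x with hVdef
    have hVopen : IsOpen V := hE0closed.isOpen_compl.connectedComponentIn
    have hxV : x ∈ V := mem_connectedComponentIn hxE'
    have hclo : x ∈ closure U := frontier_subset_closure hx
    obtain ⟨y, hyV, hyU⟩ := mem_closure_iff.mp hclo V hVopen hxV
    have hpre : IsPreconnected (V ∪ U) :=
      IsPreconnected.union y hyV hyU
        (isConnected_connectedComponentIn_iff.mpr hxE').isPreconnected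
        hUconn.isPreconnected
    have hsub2 : V ∪ U ⊆ connectedComponentIn E0ᶜ 0 :=
      hpre.subset_connectedComponentIn (Or.inr hU0)
        (union_subset (connectedComponentIn_subset _ _) hUsub)
    have hxU : x ∈ U := hsub2 (Or.inl hxV)
    rw [hUopen.frontier_eq] at hx
    exact hx.2 hxU
  -- the ball of radius `M^[m] R` is inside the hole
  have ball_sub : ball (0 : ℂ) ((maxMod f)^[m] R) ⊆ U := by
    refine (convex_ball (0 : ℂ) _).isPreconnected.subset_connectedComponentIn
      (mem_ball_self (iter_pos hR hM m)) ?_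
    intro z hz hzE
    have h1 : (maxMod f)^[m] R ≤ ‖z‖ := abs_ge_of_mem_levelSet hR hM hzE
    have h2 : ‖z‖ < (maxMod f)^[m] R := by
      have := mem_ball_zero_iff.mp hz
      exact this
    exact absurd (h1.trans_lt h2) (lt_irrefl _)
  -- points in the hole don't map into the next level set
  have step3 : ∀ z ∈ U, f z ∉ E1 := by
    intro z hz hfz
    have hzE : z ∉ E0 := hUsub hz
    rw [hE0def, mem_levelSet_nat] at hzE
    push_neg at hzE
    obtain ⟨n, hn⟩ := hzE
    have hn' : ‖f^[n] z‖ < (maxMod f)^[n + m] R := hn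
    rw [hE1def, mem_levelSet_nat] at hfz
    cases n with
    | zero =>
      have hzlt : ‖z‖ < (maxMod f)^[m] R := by simpa using hn'
      have h1 : ‖f z‖ < maxMod f ((maxMod f)^[m] R) :=
        lt_maxMod hf (iter_pos hR hM m) hzlt
      rw [← Function.iterate_succ_apply' (maxMod f) m R] at h1
      have h2 := hfz 0
      simp only [Function.iterate_zero, id_eq, Nat.zero_add] at h2
      exact absurd (h2.trans_lt h1) (lt_irrefl _)
    | succ k =>
      have h2 := hfz k
      rw [← Function.iterate_succ_apply f k z] at h2
      rw [show k + (m + 1) = k + 1 + m by omega] at h2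
      exact absurd (h2.trans_lt hn') (lt_irrefl _)
  -- the image of the frontier lies in the next level set
  have hfront1 : f '' frontier U ⊆ E1 := by
    rintro x ⟨z, hz, rfl⟩
    exact levelSet_maps_to (frontier_sub hz)
  have hcl_compact : IsCompact (closure U) := hb.isCompact_closure
  have h_imgclosure : closure (f '' U) ⊆ f '' closure U :=
    closure_minimal (image_mono subset_closure) (hcl_compact.image hc).isClosed
  have hclosure_eq : closure U = U ∪ frontier U := by
    rw [hUopen.frontier_eq, union_diff_cancel subset_closure]
  have hkey : closure (f '' U) ⊆ f '' U ∪ E1 := by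
    intro w hw
    have := h_imgclosure hw
    rw [hclosure_eq, image_union] at this
    rcases this with h | h
    · exact Or.inl h
    · exact Or.inr (hfront1 h)
  have hfUopen : IsOpen (f '' U) := hf.isOpenMap U hUopen
  have hfUpre : IsPreconnected (f '' U) := hUconn.isPreconnected.image f hc.continuousOn
  -- `f 0` is small
  have hf0 : ‖f 0‖ < (maxMod f)^[m + 1] R := by
    have h1 : ‖(0 : ℂ)‖ < (maxMod f)^[m] R := by
      simpa using iter_pos hR hM m
    have h2 := lt_maxMod hf (iter_pos hR hM m) h1
    rwa [← Function.iterate_succ_apply' (maxMod f) m R] at h2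
  have hdisj : Disjoint (f '' U) (closure (f '' U))ᶜ :=
    disjoint_compl_right.mono_left subset_closure
  -- the ball of radius `M^[m+1] R` is contained in `f '' U`
  have hD : ball (0 : ℂ) ((maxMod f)^[m + 1] R) ⊆ f '' U := by
    refine IsPreconnected.subset_left_of_subset_union hfUopen
      isClosed_closure.isOpen_compl hdisj ?_ ?_ (convex_ball _ _).isPreconnected
    · intro w hw
      by_cases hwc : w ∈ closure (f '' U)
      · left
        rcases hkey hwc with h | h
        · exact h
        · exfalso
          have h1 : (maxMod f)^[m + 1] R ≤ ‖w‖ :=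
            abs_ge_of_mem_levelSet hR hM (by exact_mod_cast h)
          have h2 : ‖w‖ < (maxMod f)^[m + 1] R := by
            have := mem_ball_zero_iff.mp hw
            exact this
          exact absurd (h1.trans_lt h2) (lt_irrefl _)
      · exact Or.inr hwc
    · exact ⟨f 0, mem_ball_zero_iff.mpr (by exact hf0),
        ⟨0, hU0, rfl⟩⟩
  have h0fU : (0 : ℂ) ∈ f '' U := hD (mem_ball_self (iter_pos hR hM (m + 1)))
  -- the image of the hole is the next hole
  have hfU_sub : f '' U ⊆ fundHole f R ((m + 1 : ℕ) : ℤ) := by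
    refine hfUpre.subset_connectedComponentIn h0fU ?_
    rintro w ⟨z, hz, rfl⟩
    exact step3 z hz
  have hH1open : IsOpen (fundHole f R ((m + 1 : ℕ) : ℤ)) :=
    hE1closed.isOpen_compl.connectedComponentIn
  have h0H1 : (0 : ℂ) ∈ fundHole f R ((m + 1 : ℕ) : ℤ) := mem_connectedComponentIn h0m1
  have hH1_sub : fundHole f R ((m + 1 : ℕ) : ℤ) ⊆ f '' U := by
    refine IsPreconnected.subset_left_of_subset_union hfUopen
      isClosed_closure.isOpen_compl hdisj ?_ ⟨0, h0H1, h0fU⟩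
      (isConnected_connectedComponentIn_iff.mpr h0m1).isPreconnected
    intro x hx
    by_cases hxc : x ∈ closure (f '' U)
    · left
      rcases hkey hxc with h | h
      · exact h
      · exact absurd h (connectedComponentIn_subset E1ᶜ 0 hx)
    · exact Or.inr hxc
  have hole_eq : f '' U = fundHole f R ((m + 1 : ℕ) : ℤ) := hfU_sub.antisymm hH1_sub
  refine ⟨hole_eq, ?_, ?_⟩
  · -- loops
    apply Subset.antisymm
    · rintro x ⟨z, hz, rfl⟩
      rw [hH1open.frontier_eq]
      constructor
      · rw [← hole_eq]
        exact image_closure_subset_closure_image hc ⟨z, frontier_subset_closure hz, rfl⟩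
      · intro hmem
        exact absurd (hfront1 ⟨z, hz, rfl⟩)
          (connectedComponentIn_subset E1ᶜ 0 hmem)
    · intro x hx
      rw [hH1open.frontier_eq, ← hole_eq] at hx
      obtain ⟨hxc, hxH⟩ := hx
      have hx2 : x ∈ f '' closure U := h_imgclosure hxc
      rw [hclosure_eq, image_union] at hx2
      rcases hx2 with h | h
      · exact absurd h hxH
      · exact h
  · rw [← hole_eq]
    exact ((hcl_compact.image hc).isBounded).subset (image_mono subset_closure)

/-- The zeroth fundamental hole is bounded when `A_R(f)` is a spider's web. -/
lemma bounded_fundHole_zero (hf : TranscEntire f) (hR : 0 < R)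
    (hM : ∀ r ≥ R, r < maxMod f r) (hweb : SpidersWeb (levelSet f R 0)) :
    IsBounded (fundHole f R ((0 : ℕ) : ℤ)) := by
  obtain ⟨-, G, hG, hUnion⟩ := hweb
  have h0 : (0 : ℂ) ∈ ⋃ n, G n := by rw [hUnion]; exact mem_univ _
  obtain ⟨n₀, h0G⟩ := mem_iUnion.mp h0
  have hE0closed : IsClosed (levelSet f R ((0 : ℕ) : ℤ)) := levelSet_closed hf _
  have h0m : (0 : ℂ) ∈ (levelSet f R ((0 : ℕ) : ℤ))ᶜ := zero_not_mem_levelSet hR hM 0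
  have hU0 : (0 : ℂ) ∈ fundHole f R ((0 : ℕ) : ℤ) := mem_connectedComponentIn h0m
  obtain ⟨hGopen, -, hGbnd, -, -, hGfront⟩ := hG n₀
  have hsub : fundHole f R ((0 : ℕ) : ℤ) ⊆ G n₀ := by
    refine IsPreconnected.subset_left_of_subset_union hGopen
      isClosed_closure.isOpen_compl
      (disjoint_compl_right.mono_left subset_closure) ?_ ⟨0, hU0, h0G⟩
      (isConnected_connectedComponentIn_iff.mpr h0m).isPreconnected
    intro x hx
    by_cases hxc : x ∈ closure (G n₀)
    · left
      rw [← union_diff_cancel (subset_closure (s := G n₀)), ← hGopen.frontier_eq] at hxc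
      rcases hxc with h | h
      · exact h
      · exfalso
        have hxE : x ∈ levelSet f R 0 := hGfront h
        have : x ∈ (levelSet f R ((0 : ℕ) : ℤ))ᶜ :=
          connectedComponentIn_subset _ _ hx
        exact this (by exact_mod_cast hxE)
    · exact Or.inr hxc
  exact hGbnd.subset hsub

lemma bounded_fundHole (hf : TranscEntire f) (hR : 0 < R)
    (hM : ∀ r ≥ R, r < maxMod f r) (hweb : SpidersWeb (levelSet f R 0)) :
    ∀ m : ℕ, IsBounded (fundHole f R (m : ℤ)) := by
  intro m
  induction m with
  | zero => exact_mod_cast bounded_fundHole_zero hf hR hM hweb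
  | succ m ih => exact (keyStep hf hR hM m ih).2.2

end Key

/-- `f^n(H_m) = H_{m+n}` and `f^n(L_m) = L_{m+n}`. -/
theorem stmt_17 (f : ℂ → ℂ) (R : ℝ) (hf : TranscEntire f) (hR : 0 < R)
    (hM : ∀ r ≥ R, r < maxMod f r) (hweb : SpidersWeb (levelSet f R 0)) :
    ∀ n : ℕ, 1 ≤ n → ∀ m : ℕ,
      f^[n] '' fundHole f R m = fundHole f R (m + n) ∧
      f^[n] '' fundLoop f R m = fundLoop f R (m + n) := by
  have hbnd := bounded_fundHole hf hR hM hweb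
  intro n hn m
  induction n, hn using Nat.le_induction with
  | base =>
    have h := keyStep hf hR hM m (hbnd m)
    constructor
    · rw [Function.iterate_one]
      rw [show ((m : ℤ) + (1 : ℕ) : ℤ) = ((m + 1 : ℕ) : ℤ) by push_cast; ring]
      exact h.1
    · rw [Function.iterate_one]
      show f '' frontier (fundHole f R (m : ℤ)) = frontier (fundHole f R ((m : ℤ) + (1 : ℕ)))
      rw [show ((m : ℤ) + (1 : ℕ) : ℤ) = ((m + 1 : ℕ) : ℤ) by push_cast; ring]
      exact h.2.1
  | succ n hn ih =>
    have h := keyStep hf hR hM (m + n) (hbnd (m + n))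
    have hcomp : f^[n + 1] = f ∘ f^[n] := Function.iterate_succ' f n
    constructor
    · rw [hcomp, image_comp, ih.1]
      rw [show ((m : ℤ) + (n : ℕ) : ℤ) = ((m + n : ℕ) : ℤ) by push_cast; ring]
      rw [show ((m : ℤ) + ((n + 1 : ℕ) : ℤ)) = ((m + n + 1 : ℕ) : ℤ) by push_cast; ring]
      exact h.1
    · show f^[n + 1] '' frontier (fundHole f R (m : ℤ)) =
        frontier (fundHole f R ((m : ℤ) + ((n + 1 : ℕ) : ℤ)))
      have ih2 : f^[n] '' frontier (fundHole f R (m : ℤ)) =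
          frontier (fundHole f R ((m : ℤ) + (n : ℕ))) := ih.2
      rw [hcomp, image_comp, ih2]
      rw [show ((m : ℤ) + (n : ℕ) : ℤ) = ((m + n : ℕ) : ℤ) by push_cast; ring]
      rw [show ((m : ℤ) + ((n + 1 : ℕ) : ℤ)) = ((m + n + 1 : ℕ) : ℤ) by push_cast; ring]
      exact h.2.1
end

section
/- Let f be a transcendental entire function, let R > 0 be such that M(r, f) > r for all r ≥ R, and suppose that A_R(f) is a spider's web. Let (L_m)_{m≥0} be the sequence of fundamental loops for A_R(f). Then there exists N ∈ ℕ such that for all n ≥ N and all m ≥ 0, L_{n+m} ∩ L_m = ∅. -/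
open Set Metric Topology Function Bornology

/-! ### Auxiliary lemmas for `stmt_18` -/

section St18Aux

open Complex

variable {f : ℂ → ℂ} {R : ℝ}

/-- The maximum modulus is attained on the sphere. -/
lemma st18_maxMod_exists (hf : Differentiable ℂ f) {r : ℝ} (hr : 0 ≤ r) :
    ∃ z : ℂ, ‖z‖ = r ∧ maxMod f r = ‖f z‖ ∧
      ∀ w : ℂ, ‖w‖ = r → ‖f w‖ ≤ ‖f z‖ := by
  have hne : (Metric.sphere (0 : ℂ) r).Nonempty := NormedSpace.sphere_nonempty.mpr hr
  have hcont : ContinuousOn (fun z => ‖f z‖) (Metric.sphere (0 : ℂ) r) :=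
    (continuous_norm.comp hf.continuous).continuousOn
  obtain ⟨z, hz, hmax⟩ := (isCompact_sphere (0 : ℂ) r).exists_isMaxOn hne hcont
  have hzabs : ‖z‖ = r := by
    simpa using mem_sphere_zero_iff_norm.mp hz
  refine ⟨z, hzabs, ?_, ?_⟩
  · have : IsGreatest ((fun z => ‖f z‖) '' Metric.sphere (0 : ℂ) r)
        (‖f z‖) := by
      constructor
      · exact Set.mem_image_of_mem _ hz
      · rintro y ⟨w, hw, rfl⟩
        exact hmax hw
    simpa [maxMod] using this.csSup_eq
  · intro w hw
    exact hmax (by simpa [mem_sphere_zero_iff_norm] using hw)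

/-- Maximum modulus principle: `|f z| ≤ M(r)` for `|z| ≤ r`. -/
lemma st18_abs_le_maxMod (hf : Differentiable ℂ f) {r : ℝ} (hr : 0 < r) {z : ℂ}
    (hz : ‖z‖ ≤ r) : ‖f z‖ ≤ maxMod f r := by
  obtain ⟨z₀, hz₀, hval, hmax⟩ := st18_maxMod_exists hf hr.le
  have key : ‖f z‖ ≤ ‖f z₀‖ := by
    refine Complex.norm_le_of_forall_mem_frontier_norm_le (U := Metric.ball (0 : ℂ) r)
      Metric.isBounded_ball hf.diffContOnCl (fun w hw => ?_) ?_
    · rw [frontier_ball (0 : ℂ) hr.ne'] at hw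
      have : ‖w‖ = r := by
        simpa using mem_sphere_zero_iff_norm.mp hw
      simpa using hmax w this
    · rw [closure_ball (0 : ℂ) hr.ne']
      simpa [mem_closedBall_zero_iff] using hz
  rw [hval]
  simpa using key

/-- Monotonicity of the maximum modulus. -/
lemma st18_maxMod_mono (hf : Differentiable ℂ f) {r s : ℝ} (hr : 0 < r) (hrs : r ≤ s) :
    maxMod f r ≤ maxMod f s := by
  obtain ⟨z, hz, hval, -⟩ := st18_maxMod_exists hf hr.le
  rw [hval]
  exact st18_abs_le_maxMod hf (hr.trans_le hrs) (by rw [hz]; exact hrs)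

lemma st18_iter_ge (hR : 0 < R) (hM : ∀ r ≥ R, r < maxMod f r) (k : ℕ) :
    R ≤ (maxMod f)^[k] R := by
  induction k with
  | zero => simp
  | succ k ih =>
    rw [Function.iterate_succ_apply']
    exact ih.trans (hM _ ih).le

lemma st18_iter_strictMono (hR : 0 < R) (hM : ∀ r ≥ R, r < maxMod f r) :
    StrictMono (fun k => (maxMod f)^[k] R) := by
  apply strictMono_nat_of_lt_succ
  intro k
  show (maxMod f)^[k] R < (maxMod f)^[k + 1] R
  rw [Function.iterate_succ_apply']
  exact hM _ (st18_iter_ge hR hM k)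

lemma st18_iter_base (hf : Differentiable ℂ f) (hR : 0 < R)
    (hM : ∀ r ≥ R, r < maxMod f r) (m : ℕ) :
    ∀ x y : ℝ, R ≤ x → x ≤ y →
      R ≤ (maxMod f)^[m] x ∧ (maxMod f)^[m] x ≤ (maxMod f)^[m] y := by
  induction m with
  | zero => intro x y hx hxy; simpa using ⟨hx, hxy⟩
  | succ m ih =>
    intro x y hx hxy
    obtain ⟨h1, h2⟩ := ih x y hx hxy
    constructor
    · rw [Function.iterate_succ_apply']
      exact h1.trans (hM _ h1).le
    · rw [Function.iterate_succ_apply', Function.iterate_succ_apply']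
      exact st18_maxMod_mono hf (hR.trans_le h1) h2

/-- The iterates of the maximum modulus are unbounded. -/
lemma st18_iter_unbounded (hf : Differentiable ℂ f) (hR : 0 < R)
    (hM : ∀ r ≥ R, r < maxMod f r) (C : ℝ) :
    ∃ k : ℕ, C ≤ (maxMod f)^[k] R := by
  by_contra h
  push_neg at h
  set a : ℕ → ℝ := fun k => (maxMod f)^[k] R with ha
  have haR : ∀ k, R ≤ a k := fun k => st18_iter_ge hR hM k
  have hmono : Monotone a := (st18_iter_strictMono hR hM).monotone
  have hbdd : BddAbove (Set.range a) := by
    refine ⟨C, ?_⟩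
    rintro x ⟨k, rfl⟩
    exact (h k).le
  set S := ⨆ k, a k with hS
  have hSa : ∀ k, a k ≤ S := fun k => le_ciSup hbdd k
  have hSR : R ≤ S := (haR 0).trans (hSa 0)
  have hS0 : (0 : ℝ) < S := hR.trans_le hSR
  have htend : Filter.Tendsto a Filter.atTop (nhds S) := tendsto_atTop_ciSup hmono hbdd
  obtain ⟨zS, hzS, hzSval, -⟩ := st18_maxMod_exists hf hS0.le
  set z : ℕ → ℂ := fun k => ((a k / S : ℝ) : ℂ) * zS with hz
  have hzabs : ∀ k, ‖z k‖ = a k := by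
    intro k
    rw [hz]
    simp only [norm_mul, Complex.norm_real, Real.norm_eq_abs, hzS]
    rw [_root_.abs_of_nonneg (div_nonneg ((hR.le.trans (haR k))) hS0.le)]
    rw [div_mul_cancel₀ _ hS0.ne']
  have hzk : Filter.Tendsto z Filter.atTop (nhds zS) := by
    have h1 : Filter.Tendsto (fun k => a k / S) Filter.atTop (nhds 1) := by
      have := htend.div_const S
      simpa [div_self hS0.ne'] using this
    have h2 := (Complex.continuous_ofReal.tendsto 1).comp h1
    rw [Complex.ofReal_one] at h2
    have h3 := h2.mul_const zS
    rw [one_mul] at h3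
    exact h3
  have habs : ∀ k, ‖f (z k)‖ ≤ S := by
    intro k
    have h1 : ‖f (z k)‖ ≤ maxMod f (a k) :=
      st18_abs_le_maxMod hf (hR.trans_le (haR k)) (le_of_eq (hzabs k))
    have h2 : maxMod f (a k) = a (k + 1) := (Function.iterate_succ_apply' _ _ _).symm
    exact h1.trans (h2 ▸ hSa (k + 1))
  have hlim : ‖f zS‖ ≤ S := by
    have hc : Filter.Tendsto (fun k => ‖f (z k)‖) Filter.atTop
        (nhds (‖f zS‖)) :=
      ((continuous_norm.comp hf.continuous).continuousAt.tendsto).comp hzk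
    exact le_of_tendsto hc (Filter.Eventually.of_forall habs)
  rw [← hzSval] at hlim
  exact absurd (hM S hSR) (not_lt.mpr hlim)

/-- Membership in natural-indexed level sets, simplified. -/
lemma st18_mem_levelSet {z : ℂ} (m : ℕ) :
    z ∈ levelSet f R (m : ℤ) ↔
      ∀ n : ℕ, (maxMod f)^[n + m] R ≤ ‖f^[n] z‖ := by
  constructor
  · intro h n
    have e : ((n : ℤ) + (m : ℤ)).toNat = n + m := by omega
    have := h n (by omega)
    rwa [e] at this
  · intro h n hn
    have e : ((n : ℤ) + (m : ℤ)).toNat = n + m := by omega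
    rw [e]
    exact h n

lemma st18_isClosed_levelSet (hf : Differentiable ℂ f) (L : ℤ) :
    IsClosed (levelSet f R L) := by
  have : levelSet f R L = ⋂ n : ℕ, {z : ℂ | 0 ≤ (n : ℤ) + L →
      (maxMod f)^[((n : ℤ) + L).toNat] R ≤ ‖f^[n] z‖} := by
    ext z
    simp [levelSet, Set.mem_iInter]
  rw [this]
  refine isClosed_iInter fun n => ?_
  by_cases h : 0 ≤ (n : ℤ) + L
  · have : {z : ℂ | 0 ≤ (n : ℤ) + L →
        (maxMod f)^[((n : ℤ) + L).toNat] R ≤ ‖f^[n] z‖}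
        = {z : ℂ | (maxMod f)^[((n : ℤ) + L).toNat] R ≤ ‖f^[n] z‖} := by
      ext z; simp [h]
    rw [this]
    exact isClosed_le continuous_const
      (continuous_norm.comp (hf.continuous.iterate n))
  · have : {z : ℂ | 0 ≤ (n : ℤ) + L →
        (maxMod f)^[((n : ℤ) + L).toNat] R ≤ ‖f^[n] z‖} = Set.univ := by
      ext z; simp [h]
    rw [this]
    exact isClosed_univ

/-- `f` maps the `m`-th level set into the `(m+1)`-th level set. -/
lemma st18_maps_levelSet {z : ℂ} (m : ℕ) (hz : z ∈ levelSet f R (m : ℤ)) :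
    f z ∈ levelSet f R ((m + 1 : ℕ) : ℤ) := by
  rw [st18_mem_levelSet] at hz ⊢
  intro n
  have h1 := hz (n + 1)
  have e : n + (m + 1) = n + 1 + m := by omega
  rw [← Function.iterate_succ_apply, e]
  exact h1

/-- The frontier of a connected component of an open set lies in its complement. -/
lemma st18_frontier_cc {U : Set ℂ} (hU : IsOpen U) (x : ℂ) :
    frontier (connectedComponentIn U x) ⊆ Uᶜ := by
  intro y hy
  by_contra hyU
  rw [Set.notMem_compl_iff] at hyU
  rw [(hU.connectedComponentIn (x := x)).frontier_eq] at hy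
  obtain ⟨hy1, hy2⟩ := hy
  have hV : IsOpen (connectedComponentIn U y) := hU.connectedComponentIn
  have hyV : y ∈ connectedComponentIn U y := mem_connectedComponentIn hyU
  obtain ⟨p, hp1, hp2⟩ := mem_closure_iff.mp hy1 _ hV hyV
  have e1 := connectedComponentIn_eq (F := U) hp1
  have e2 := connectedComponentIn_eq (F := U) hp2
  exact hy2 (by rw [e2, ← e1]; exact hyV)

/-- The ball of radius `M^[m](R)` is contained in the `m`-th fundamental hole. -/
lemma st18_ball_subset_hole (hR : 0 < R) (hM : ∀ r ≥ R, r < maxMod f r) (m : ℕ) :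
    Metric.ball (0 : ℂ) ((maxMod f)^[m] R) ⊆ fundHole f R (m : ℤ) := by
  have hsub : Metric.ball (0 : ℂ) ((maxMod f)^[m] R) ⊆ (levelSet f R (m : ℤ))ᶜ := by
    intro z hz
    intro hmem
    rw [st18_mem_levelSet] at hmem
    have h0 := hmem 0
    simp only [zero_add, Function.iterate_zero_apply] at h0
    rw [mem_ball_zero_iff] at hz
    exact absurd h0 (not_le.mpr hz)
  exact (convex_ball (0 : ℂ) _).isPreconnected.subset_connectedComponentIn
    (mem_ball_zero_iff.mpr (by simpa using hR.trans_le (st18_iter_ge hR hM m))) hsub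

/-- A transcendental entire function is nonconstant. -/
lemma st18_nonconstant (hf : TranscEntire f) : ¬ ∀ z : ℂ, f z = f 0 := by
  intro h
  exact hf.2 ⟨Polynomial.C (f 0), fun z => by simp [h z]⟩

/-- Strict maximum principle: `|f 0| < M(R)`. -/
lemma st18_abs_f0_lt (hf : TranscEntire f) (hR : 0 < R) :
    ‖f 0‖ < maxMod f R := by
  by_contra h
  push_neg at h
  have hmax : IsMaxOn (norm ∘ f) (Metric.ball (0 : ℂ) R) 0 := by
    intro z hz
    have h1 : ‖f z‖ ≤ maxMod f R :=
      st18_abs_le_maxMod hf.1 hR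
        (by exact (mem_ball_zero_iff.mp hz).le)
    simp only [Function.comp_apply, Set.mem_setOf_eq]
    exact h1.trans h
  have heq : Set.EqOn f (Function.const ℂ (f 0)) (Metric.ball (0 : ℂ) R) :=
    Complex.eqOn_of_isPreconnected_of_isMaxOn_norm
      (convex_ball (0 : ℂ) R).isPreconnected Metric.isOpen_ball
      hf.1.differentiableOn (Metric.mem_ball_self hR) hmax
  have hA : AnalyticOnNhd ℂ f Set.univ :=
    Complex.analyticOnNhd_univ_iff_differentiable.mpr hf.1
  have hglobal : Set.EqOn f (Function.const ℂ (f 0)) Set.univ :=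
    hA.eqOn_of_preconnected_of_eventuallyEq analyticOnNhd_const isPreconnected_univ
      (Set.mem_univ 0)
      (heq.eventuallyEq_of_mem (Metric.isOpen_ball.mem_nhds (Metric.mem_ball_self hR)))
  exact st18_nonconstant hf fun z => hglobal (Set.mem_univ z)

/-- A transcendental entire function is an open map. -/
lemma st18_isOpenMap (hf : TranscEntire f) (s : Set ℂ) (hs : IsOpen s) :
    IsOpen (f '' s) := by
  have hA : AnalyticOnNhd ℂ f Set.univ :=
    Complex.analyticOnNhd_univ_iff_differentiable.mpr hf.1
  rcases hA.is_constant_or_isOpen isPreconnected_univ with ⟨w, hw⟩ | h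
  · exact absurd (fun z => (hw z (Set.mem_univ z)).trans (hw 0 (Set.mem_univ 0)).symm)
      (st18_nonconstant hf)
  · exact h s (Set.subset_univ s) hs

end St18Aux

/-- eventually the fundamental loops are pairwise disjoint at distance `N`. -/
theorem stmt_18 (f : ℂ → ℂ) (R : ℝ) (hf : TranscEntire f) (hR : 0 < R)
    (hM : ∀ r ≥ R, r < maxMod f r) (hweb : SpidersWeb (levelSet f R 0)) :
    ∃ N : ℕ, ∀ n : ℕ, N ≤ n → ∀ m : ℕ,
      fundLoop f R (↑n + ↑m) ∩ fundLoop f R m = ∅ := by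
  have hdiff : Differentiable ℂ f := hf.1
  -- the holes are open
  have hUopen : ∀ m : ℕ, IsOpen ((levelSet f R (m : ℤ))ᶜ) := fun m =>
    (st18_isClosed_levelSet hdiff (m : ℤ)).isOpen_compl
  have hHopen : ∀ m : ℕ, IsOpen (fundHole f R (m : ℤ)) := fun m =>
    (hUopen m).connectedComponentIn
  -- loops lie in the level sets
  have hLoop : ∀ m : ℕ, fundLoop f R (m : ℤ) ⊆ levelSet f R (m : ℤ) := by
    intro m
    have := st18_frontier_cc (hUopen m) (0 : ℂ)
    simpa [fundLoop, fundHole] using this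
  -- `H₀` is bounded, via the spider's web
  obtain ⟨-, G, hG, hGuniv⟩ := hweb
  obtain ⟨k₀, hk₀⟩ : ∃ k, (0 : ℂ) ∈ G k := by
    have : (0 : ℂ) ∈ ⋃ n, G n := hGuniv ▸ Set.mem_univ 0
    simpa [Set.mem_iUnion] using this
  have hzero : levelSet f R ((0 : ℕ) : ℤ) = levelSet f R 0 := by norm_num
  have hH0sub : fundHole f R ((0 : ℕ) : ℤ) ⊆ G k₀ := by
    have hGopen : IsOpen (G k₀) := (hG k₀).1
    have hGfr : frontier (G k₀) ⊆ levelSet f R 0 := (hG k₀).2.2.2.2.2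
    have hsubun : fundHole f R ((0 : ℕ) : ℤ) ⊆ G k₀ ∪ (closure (G k₀))ᶜ := by
      intro z hz
      have hzc : z ∈ (levelSet f R ((0 : ℕ) : ℤ))ᶜ :=
        connectedComponentIn_subset _ _ hz
      have hznf : z ∉ frontier (G k₀) := fun hzf => hzc (hzero ▸ hGfr hzf)
      by_cases hcl : z ∈ closure (G k₀)
      · rw [closure_eq_self_union_frontier] at hcl
        rcases hcl with h | h
        · exact Or.inl h
        · exact absurd h hznf
      · exact Or.inr hcl
    have h0mem : (0 : ℂ) ∈ fundHole f R ((0 : ℕ) : ℤ) :=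
      st18_ball_subset_hole hR hM 0
        (mem_ball_zero_iff.mpr (by simpa using hR))
    exact IsPreconnected.subset_left_of_subset_union hGopen
      isClosed_closure.isOpen_compl
      (disjoint_compl_right.mono_left subset_closure) hsubun
      ⟨0, h0mem, hk₀⟩ isPreconnected_connectedComponentIn
  obtain ⟨ρ₀, hρ₀⟩ := (((hG k₀).2.2.1).subset hH0sub).subset_closedBall 0
  set ρ₁ : ℝ := max R ρ₀ with hρ₁
  have hρ₁R : R ≤ ρ₁ := le_max_left _ _
  -- inductive bound on the holes
  have hole_bound : ∀ m : ℕ, fundHole f R (m : ℤ) ⊆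
      Metric.closedBall (0 : ℂ) ((maxMod f)^[m] ρ₁) := by
    intro m
    induction m with
    | zero =>
      simpa using hρ₀.trans (Metric.closedBall_subset_closedBall (le_max_right R ρ₀))
    | succ m ih =>
      set ρ : ℝ := (maxMod f)^[m] ρ₁ with hρ
      have hρR : R ≤ ρ := (st18_iter_base hdiff hR hM m ρ₁ ρ₁ hρ₁R le_rfl).1
      have hρpos : 0 < ρ := hR.trans_le hρR
      set W : Set ℂ := f '' fundHole f R (m : ℤ) with hW
      have hWopen : IsOpen W := st18_isOpenMap hf _ (hHopen m)
      -- W is contained in the closed ball of radius M(ρ)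
      have hWball : W ⊆ Metric.closedBall (0 : ℂ) (maxMod f ρ) := by
        rintro w ⟨z, hz, rfl⟩
        have hzρ : ‖z‖ ≤ ρ := by
          have := ih hz
          rwa [Metric.mem_closedBall, Complex.dist_eq, sub_zero] at this
        rw [Metric.mem_closedBall, Complex.dist_eq, sub_zero]
        exact st18_abs_le_maxMod hdiff hρpos hzρ
      -- closure of W is inside the image of the closure of the hole
      have hKcompact : IsCompact (f '' closure (fundHole f R (m : ℤ))) := by
        refine IsCompact.image ?_ hdiff.continuous
        exact IsCompact.of_isClosed_subset (isCompact_closedBall (0 : ℂ) ρ)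
          isClosed_closure (closure_minimal ih Metric.isClosed_closedBall)
      have hclW : closure W ⊆ f '' closure (fundHole f R (m : ℤ)) :=
        closure_minimal (Set.image_mono subset_closure) hKcompact.isClosed
      -- frontier of W lies in the (m+1)-th level set
      have hfrW : frontier W ⊆ levelSet f R ((m + 1 : ℕ) : ℤ) := by
        intro w hw
        have hw1 : w ∈ closure W := frontier_subset_closure hw
        obtain ⟨z, hz, rfl⟩ := hclW hw1
        rw [closure_eq_self_union_frontier] at hz
        rcases hz with hz | hz
        · exfalso
          rw [hWopen.frontier_eq] at hw
          exact hw.2 (Set.mem_image_of_mem f hz)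
        · exact st18_maps_levelSet m (hLoop m hz)
      -- f 0 lies in W and in the (m+1)-th hole
      have hf0W : f 0 ∈ W :=
        Set.mem_image_of_mem f (st18_ball_subset_hole hR hM m
          (mem_ball_zero_iff.mpr (by simpa using hR.trans_le (st18_iter_ge hR hM m))))
      have hf0hole : f 0 ∈ fundHole f R ((m + 1 : ℕ) : ℤ) := by
        apply st18_ball_subset_hole hR hM (m + 1)
        rw [mem_ball_zero_iff]
        calc ‖f 0‖ < maxMod f R := st18_abs_f0_lt hf hR
        _ = (maxMod f)^[1] R := by simp
        _ ≤ (maxMod f)^[m + 1] R :=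
            (st18_iter_strictMono hR hM).monotone (by omega)
      -- the (m+1)-th hole is contained in W
      have hsubun : fundHole f R ((m + 1 : ℕ) : ℤ) ⊆ W ∪ (closure W)ᶜ := by
        intro z hz
        have hzc : z ∈ (levelSet f R ((m + 1 : ℕ) : ℤ))ᶜ :=
          connectedComponentIn_subset _ _ hz
        have hznf : z ∉ frontier W := fun h => hzc (hfrW h)
        by_cases hcl : z ∈ closure W
        · rw [closure_eq_self_union_frontier] at hcl
          rcases hcl with h | h
          · exact Or.inl h
          · exact absurd h hznf
        · exact Or.inr hcl
      have hsubW : fundHole f R ((m + 1 : ℕ) : ℤ) ⊆ W :=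
        IsPreconnected.subset_left_of_subset_union hWopen
          isClosed_closure.isOpen_compl
          (disjoint_compl_right.mono_left subset_closure) hsubun
          ⟨f 0, hf0hole, hf0W⟩ isPreconnected_connectedComponentIn
      intro z hz
      have : z ∈ Metric.closedBall (0 : ℂ) (maxMod f ρ) := hWball (hsubW hz)
      rwa [Function.iterate_succ_apply', ← hρ]
  -- choose N
  obtain ⟨N₀, hN₀⟩ := st18_iter_unbounded hdiff hR hM ρ₁
  refine ⟨N₀ + 1, fun n hn m => ?_⟩
  rw [Set.eq_empty_iff_forall_notMem]
  rintro z ⟨hz1, hz2⟩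
  -- rewrite the index of the first loop
  have hcast : ((n : ℤ) + (m : ℤ)) = ((n + m : ℕ) : ℤ) := by push_cast; ring
  rw [show fundLoop f R (↑n + ↑m) = fundLoop f R ((n + m : ℕ) : ℤ) from by rw [hcast]] at hz1
  -- lower bound on |z| from the first loop
  have hlow : (maxMod f)^[n + m] R ≤ ‖z‖ := by
    have hmem := hLoop (n + m) hz1
    rw [st18_mem_levelSet] at hmem
    have := hmem 0
    simpa using this
  -- upper bound on |z| from the second loop
  have hup : ‖z‖ ≤ (maxMod f)^[m] ρ₁ := by
    have h1 : z ∈ closure (fundHole f R (m : ℤ)) := frontier_subset_closure hz2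
    have h2 : z ∈ Metric.closedBall (0 : ℂ) ((maxMod f)^[m] ρ₁) :=
      closure_minimal (hole_bound m) Metric.isClosed_closedBall h1
    rwa [Metric.mem_closedBall, Complex.dist_eq, sub_zero] at h2
  -- contradiction
  have h3 : (maxMod f)^[m] ρ₁ ≤ (maxMod f)^[m + N₀] R := by
    have := (st18_iter_base hdiff hR hM m ρ₁ ((maxMod f)^[N₀] R) hρ₁R hN₀).2
    rwa [← Function.iterate_add_apply] at this
  have h4 : (maxMod f)^[m + N₀] R < (maxMod f)^[n + m] R :=
    st18_iter_strictMono hR hM (by omega)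
  linarith
end
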